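/- (Lions–Aubin lemma, part (ii).) Let X₀, X, X₁ be Banach spaces, i : X₀ → X a compact linear operator, and j : X → X₁ an injective continuous linear map. Let T > 0 and 1 < q ≤ ∞. Suppose (u_k) is a sequence of strongly measurable functions [0,T] → X₀ that is bounded in L^∞(0,T; X₀), and for each k there exist g_k ∈ L^q(0,T; X₁) and a_k ∈ X₁ with j(i(u_k(t))) = a_k + ∫₀^t g_k(s) ds for a.e. t ∈ [0,T], with (g_k) bounded in L^q(0,T; X₁). Then there is a subsequence (u_{k_j}) and continuous functions v_j : [0,T] → X with v_j(t) = i(u_{k_j}(t)) for a.e. t, such that (v_j) converges uniformly on [0,T] to a continuous function v : [0,T] → X. -/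

import Mathlib

open MeasureTheory Filter Topology
open scoped ENNReal

/-- **Lions–Aubin lemma, part (ii).**
Let `X₀, X, X₁` be Banach spaces, `i : X₀ → X` a compact linear operator and
`j : X → X₁` injective and continuous.  Let `T > 0` and `1 < q ≤ ∞`.
If `(u_k)` is bounded in `L^∞(0,T;X₀)` and `j(i(u_k(t))) = a_k + ∫₀^t g_k(s) ds`
a.e. with `(g_k)` bounded in `L^q(0,T;X₁)`, then there is a subsequence `(u_{k_j})`
and continuous representatives `v_j` of `i ∘ u_{k_j}` on `[0,T]` converging uniformly
on `[0,T]` to a continuous function `v`. -/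
theorem stmt_8
    {X₀ X X₁ : Type*}
    [NormedAddCommGroup X₀] [NormedSpace ℝ X₀] [CompleteSpace X₀]
    [NormedAddCommGroup X] [NormedSpace ℝ X] [CompleteSpace X]
    [NormedAddCommGroup X₁] [NormedSpace ℝ X₁] [CompleteSpace X₁]
    (i : X₀ →L[ℝ] X) (hi : IsCompactOperator i)
    (j : X →L[ℝ] X₁) (hj : Function.Injective j)
    (T : ℝ) (hT : 0 < T)
    (q : ℝ≥0∞) (hq1 : 1 < q)
    (u : ℕ → ℝ → X₀) (g : ℕ → ℝ → X₁) (a : ℕ → X₁)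
    (hu_meas : ∀ k, AEStronglyMeasurable (u k) (volume.restrict (Set.Icc 0 T)))
    (hg_meas : ∀ k, AEStronglyMeasurable (g k) (volume.restrict (Set.Icc 0 T)))
    (C : ℝ≥0∞) (hC : C ≠ ∞)
    (hu_bdd : ∀ k, eLpNorm (u k) ∞ (volume.restrict (Set.Icc 0 T)) ≤ C)
    (C' : ℝ≥0∞) (hC' : C' ≠ ∞)
    (hg_bdd : ∀ k, eLpNorm (g k) q (volume.restrict (Set.Icc 0 T)) ≤ C')
    (heq : ∀ k, ∀ᵐ t ∂(volume.restrict (Set.Icc 0 T)),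
      j (i (u k t)) = a k + ∫ s in (0 : ℝ)..t, g k s) :
    ∃ φ : ℕ → ℕ, StrictMono φ ∧ ∃ v : ℕ → ℝ → X, ∃ vlim : ℝ → X,
      (∀ m, ContinuousOn (v m) (Set.Icc 0 T)) ∧
      (∀ m, ∀ᵐ t ∂(volume.restrict (Set.Icc 0 T)), v m t = i (u (φ m) t)) ∧
      ContinuousOn vlim (Set.Icc 0 T) ∧
      TendstoUniformlyOn v vlim atTop (Set.Icc 0 T) := by
  classical
  set μ : Measure ℝ := volume.restrict (Set.Icc 0 T) with hμdef
  haveI : IsFiniteMeasure μ := by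
    constructor
    rw [hμdef, Measure.restrict_apply_univ, Real.volume_Icc]
    exact ENNReal.ofReal_lt_top
  set R : ℝ := C.toReal with hRdef
  set M : ℝ := C'.toReal with hMdef
  have hM0 : 0 ≤ M := ENNReal.toReal_nonneg
  set ε : ℝ := 1 - 1 / q.toReal with hεdef
  have hε : 0 < ε := by
    rcases eq_or_ne q ∞ with hq | hq
    · rw [hεdef, hq]; norm_num
    · have h1 : 1 < q.toReal := by
        rw [← ENNReal.toReal_one]
        exact (ENNReal.toReal_lt_toReal (by simp) hq).mpr hq1
      have h2 : 1 / q.toReal < 1 := by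
        rw [div_lt_one (lt_trans one_pos h1)]; exact h1
      rw [hεdef]; linarith
  set h : ℕ → ℝ → X₁ := fun k t => a k + ∫ s in (0:ℝ)..t, g k s with hhdef
  -- integrability of g
  have hgmem : ∀ k, MemLp (g k) q μ := fun k =>
    ⟨hg_meas k, lt_of_le_of_lt (hg_bdd k) hC'.lt_top⟩
  have hgint : ∀ k, IntegrableOn (g k) (Set.Icc 0 T) volume := fun k =>
    (hgmem k).integrable hq1.le
  have hII : ∀ k, ∀ s ∈ Set.Icc (0:ℝ) T, ∀ t ∈ Set.Icc (0:ℝ) T,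
      IntervalIntegrable (g k) volume s t := by
    intro k s hs t ht
    rw [intervalIntegrable_iff]
    refine (hgint k).mono_set ?_
    refine (Set.uIoc_subset_uIcc).trans ?_
    exact Set.uIcc_subset_Icc hs ht
  -- key Hölder estimate
  have key : ∀ k, ∀ s ∈ Set.Icc (0:ℝ) T, ∀ t ∈ Set.Icc (0:ℝ) T, s ≤ t →
      ‖h k t - h k s‖ ≤ M * (t - s) ^ ε := by
    intro k s hs t ht hst
    have hsub : Set.Ioc s t ⊆ Set.Icc 0 T := fun x hx =>
      ⟨le_trans hs.1 hx.1.le, le_trans hx.2 ht.2⟩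
    have hle : volume.restrict (Set.Ioc s t) ≤ μ := by
      rw [hμdef]; exact Measure.restrict_mono hsub le_rfl
    have hmeas' : AEStronglyMeasurable (g k) (volume.restrict (Set.Ioc s t)) :=
      (hg_meas k).mono_measure hle
    have h1 : h k t - h k s = ∫ r in s..t, g k r := by
      rw [hhdef]
      simp only [add_sub_add_left_eq_sub]
      exact intervalIntegral.integral_interval_sub_left
        (hII k 0 ⟨le_rfl, hT.le⟩ t ht) (hII k 0 ⟨le_rfl, hT.le⟩ s hs)
    have hfin : C' * ENNReal.ofReal (t - s) ^ ε ≠ ∞ :=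
      ENNReal.mul_ne_top hC' (ENNReal.rpow_ne_top_of_nonneg hε.le ENNReal.ofReal_ne_top)
    have h2 : (∫⁻ r in Set.Ioc s t, ‖g k r‖₊ ∂volume) ≤ C' * ENNReal.ofReal (t - s) ^ ε := by
      have e1 : (∫⁻ r in Set.Ioc s t, ‖g k r‖₊ ∂volume)
          = eLpNorm (g k) 1 (volume.restrict (Set.Ioc s t)) :=
        by simpa [enorm_eq_nnnorm] using (eLpNorm_one_eq_lintegral_enorm (f := g k) (μ := volume.restrict (Set.Ioc s t))).symm
      rw [e1]
      calc eLpNorm (g k) 1 (volume.restrict (Set.Ioc s t))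
          ≤ eLpNorm (g k) q (volume.restrict (Set.Ioc s t)) *
            (volume.restrict (Set.Ioc s t)) Set.univ ^ (1 / (1:ℝ≥0∞).toReal - 1 / q.toReal) :=
            eLpNorm_le_eLpNorm_mul_rpow_measure_univ hq1.le hmeas'
        _ ≤ C' * ENNReal.ofReal (t - s) ^ (1 / (1:ℝ≥0∞).toReal - 1 / q.toReal) := by
            rw [Measure.restrict_apply_univ, Real.volume_Ioc]
            exact mul_le_mul_left ((eLpNorm_mono_measure _ hle).trans (hg_bdd k)) _
        _ = C' * ENNReal.ofReal (t - s) ^ ε := by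
            rw [ENNReal.toReal_one, hεdef]
            norm_num
    rw [h1]
    calc ‖∫ r in s..t, g k r‖ ≤ ∫ r in s..t, ‖g k r‖ :=
          intervalIntegral.norm_integral_le_integral_norm hst
      _ = ∫ r in Set.Ioc s t, ‖g k r‖ := by rw [intervalIntegral.integral_of_le hst]
      _ = (∫⁻ r in Set.Ioc s t, ‖g k r‖₊ ∂volume).toReal :=
          integral_norm_eq_lintegral_enorm hmeas'
      _ ≤ (C' * ENNReal.ofReal (t - s) ^ ε).toReal := ENNReal.toReal_mono hfin h2
      _ = M * (t - s) ^ ε := by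
          rw [ENNReal.toReal_mul, ← ENNReal.toReal_rpow,
            ENNReal.toReal_ofReal (sub_nonneg.2 hst), hMdef]
  have key' : ∀ k, ∀ s ∈ Set.Icc (0:ℝ) T, ∀ t ∈ Set.Icc (0:ℝ) T,
      ‖h k t - h k s‖ ≤ M * |t - s| ^ ε := by
    intro k s hs t ht
    rcases le_total s t with hst | hst
    · rw [abs_of_nonneg (sub_nonneg.2 hst)]; exact key k s hs t ht hst
    · rw [norm_sub_rev, abs_sub_comm, abs_of_nonneg (sub_nonneg.2 hst)]
      exact key k t ht s hs hst
  -- uniform modulus of continuity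
  have hmod : ∀ δ : ℝ, 0 < δ → ∃ η > (0:ℝ), ∀ k, ∀ s ∈ Set.Icc (0:ℝ) T,
      ∀ t ∈ Set.Icc (0:ℝ) T, |t - s| < η → ‖h k t - h k s‖ < δ := by
    intro δ hδ
    have htend : Tendsto (fun d : ℝ => M * d ^ ε) (𝓝[>] 0) (𝓝 0) := by
      have hc : ContinuousAt (fun d : ℝ => d ^ ε) 0 :=
        Real.continuousAt_rpow_const 0 ε (Or.inr hε.le)
      have h0 : Tendsto (fun d : ℝ => d ^ ε) (𝓝[>] (0:ℝ)) (𝓝 0) := by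
        have := (hc.tendsto).mono_left (nhdsWithin_le_nhds (s := Set.Ioi (0:ℝ)))
        rwa [Real.zero_rpow hε.ne'] at this
      simpa using h0.const_mul M
    have hev : ∀ᶠ d in 𝓝[>] (0:ℝ), M * d ^ ε < δ :=
      htend.eventually (tendsto_id.eventually_lt_const hδ)
    rw [eventually_nhdsWithin_iff, Metric.eventually_nhds_iff] at hev
    obtain ⟨η, hη, hηp⟩ := hev
    refine ⟨η, hη, fun k s hs t ht hts => ?_⟩
    rcases eq_or_ne t s with rfl | hne
    · simpa using hδ
    · have habs : 0 < |t - s| := abs_pos.mpr (sub_ne_zero.mpr hne)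
      have := hηp (by rwa [Real.dist_eq, sub_zero, abs_abs] : dist |t - s| 0 < η) habs
      exact lt_of_le_of_lt (key' k s hs t ht) this
  -- continuity of h on Icc
  have hcont : ∀ k, ContinuousOn (h k) (Set.Icc 0 T) := by
    intro k t ht
    rw [Metric.continuousWithinAt_iff]
    intro δ hδ
    obtain ⟨η, hη, hmod'⟩ := hmod δ hδ
    refine ⟨η, hη, fun s hs hdist => ?_⟩
    rw [dist_eq_norm]
    exact hmod' k t ht s hs (by rwa [Real.dist_eq] at hdist)
  -- the compact set
  have hi' : IsCompactOperator ⇑(i.toLinearMap) := hi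
  have hK : IsCompact (closure (⇑i '' Metric.closedBall 0 R)) := by
    have := hi'.isCompact_closure_image_closedBall (𝕜₁ := ℝ) R
    simpa using this
  set K : Set X := closure (⇑i '' Metric.closedBall 0 R) with hKdef
  have hJK : IsCompact (⇑j '' K) := hK.image j.continuous
  -- a.e. properties
  have hae : ∀ k, ∀ᵐ t ∂μ, j (i (u k t)) = h k t ∧ ‖u k t‖ ≤ R := by
    intro k
    have hub : ∀ᵐ t ∂μ, ‖u k t‖ ≤ R := by
      filter_upwards [ae_le_eLpNormEssSup (f := u k) (μ := μ)] with t htt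
      have hle : (‖u k t‖₊ : ℝ≥0∞) ≤ C := by
        refine le_trans htt ?_
        rw [← eLpNorm_exponent_top]; exact hu_bdd k
      calc ‖u k t‖ = ((‖u k t‖₊ : ℝ≥0∞)).toReal := by simp
        _ ≤ C.toReal := ENNReal.toReal_mono hC hle
    filter_upwards [heq k, hub] with t h1 h2
    exact ⟨h1, h2⟩
  -- all values of h lie in j '' K
  have hmem : ∀ k, ∀ t ∈ Set.Icc (0:ℝ) T, h k t ∈ ⇑j '' K := by
    intro k t ht
    set S : Set ℝ := {s : ℝ | s ∈ Set.Icc (0:ℝ) T ∧ j (i (u k s)) = h k s ∧ ‖u k s‖ ≤ R}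
      with hSdef
    have hSae : ∀ᵐ s ∂μ, s ∈ S := by
      filter_upwards [hae k, ae_restrict_mem measurableSet_Icc] with s h1 h2
      exact ⟨h2, h1⟩
    have hS0 : μ {s | s ∉ S} = 0 := hSae
    have hS : ∀ r : ℝ, 0 < r → ∃ s ∈ S, |s - t| < r := by
      intro r hr
      by_contra hcon
      push_neg at hcon
      set lo : ℝ := max 0 (t - r/2) with hlodef
      set hi2 : ℝ := min T (t + r/2) with hhidef
      have hlohi : lo < hi2 := by
        rw [hlodef, hhidef]
        apply max_lt
        · exact lt_min hT (by nlinarith [ht.1])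
        · exact lt_min (by linarith [ht.2]) (by linarith)
      have hIooIcc : Set.Ioo lo hi2 ⊆ Set.Icc 0 T := fun x hx =>
        ⟨le_trans (le_max_left _ _) hx.1.le, le_trans hx.2.le (min_le_left _ _)⟩
      have hIooS : Set.Ioo lo hi2 ⊆ {s | s ∉ S} := by
        intro x hx
        intro hxS
        have h1 : t - r/2 ≤ lo := le_max_right _ _
        have h2 : hi2 ≤ t + r/2 := min_le_right _ _
        have : |x - t| < r := by
          rw [abs_lt]
          constructor <;> [nlinarith [hx.1]; nlinarith [hx.2]]
        exact absurd this (not_lt.mpr (hcon x hxS))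
      have hpos : 0 < μ (Set.Ioo lo hi2) := by
        rw [hμdef, Measure.restrict_apply measurableSet_Ioo,
          Set.inter_eq_self_of_subset_left hIooIcc, Real.volume_Ioo]
        exact ENNReal.ofReal_pos.mpr (by linarith)
      have : μ (Set.Ioo lo hi2) = 0 :=
        measure_mono_null hIooS hS0
      rw [this] at hpos
      exact lt_irrefl _ hpos
    choose w hw1 hw2 using fun n : ℕ => hS (1/(n+1)) (by positivity)
    have hwt : Tendsto w atTop (𝓝 t) := by
      rw [tendsto_iff_dist_tendsto_zero]
      refine squeeze_zero (g := fun n : ℕ => 1/((n:ℝ)+1)) (fun n => dist_nonneg)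
        (fun n => ?_) tendsto_one_div_add_atTop_nhds_zero_nat
      rw [Real.dist_eq]
      exact (hw2 n).le
    have hhw : Tendsto (fun n => h k (w n)) atTop (𝓝 (h k t)) := by
      refine ((hcont k t ht).tendsto).comp ?_
      rw [tendsto_nhdsWithin_iff]
      exact ⟨hwt, Eventually.of_forall fun n => (hw1 n).1⟩
    refine hJK.isClosed.mem_of_tendsto hhw (Eventually.of_forall fun n => ?_)
    exact ⟨i (u k (w n)),
      subset_closure (Set.mem_image_of_mem _ (mem_closedBall_zero_iff.mpr (hw1 n).2.2)),
      ((hw1 n).2.1)⟩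
  -- the homeomorphism K ≃ₜ j '' K
  haveI hKcs : CompactSpace K := isCompact_iff_compactSpace.mp hK
  haveI hJKcs : CompactSpace (⇑j '' K) := isCompact_iff_compactSpace.mp hJK
  have hbij : Function.Bijective
      (fun x : K => (⟨j x, Set.mem_image_of_mem _ x.2⟩ : ⇑j '' K)) := by
    constructor
    · intro x y hxy
      have : j (x : X) = j (y : X) := congrArg Subtype.val hxy
      exact Subtype.ext (hj this)
    · rintro ⟨y, x, hx, rfl⟩
      exact ⟨⟨x, hx⟩, rfl⟩
  set eqv : K ≃ (⇑j '' K) := Equiv.ofBijective _ hbij with heqvdef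
  have hceqv : Continuous ⇑eqv :=
    Continuous.subtype_mk (j.continuous.comp continuous_subtype_val) _
  set e : K ≃ₜ (⇑j '' K) := hceqv.homeoOfEquivCompactToT2 with hedef
  have hje : ∀ y : (⇑j '' K), j ((e.symm y : K) : X) = (y : X₁) := fun y =>
    congrArg Subtype.val (e.apply_symm_apply y)
  have hui : UniformContinuous ⇑e.symm :=
    CompactSpace.uniformContinuous_of_continuous e.symm.continuous
  -- the continuous representatives, as bounded continuous functions
  haveI : CompactSpace (Set.Icc (0:ℝ) T) := isCompact_iff_compactSpace.mp isCompact_Icc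
  set hfun : ℕ → (Set.Icc (0:ℝ) T) → X := fun k t =>
    ((e.symm ⟨h k t, hmem k t t.2⟩ : K) : X) with hfundef
  have hfc : ∀ k, Continuous (hfun k) := by
    intro k
    refine continuous_subtype_val.comp (e.symm.continuous.comp ?_)
    exact Continuous.subtype_mk ((hcont k).restrict) _
  set F : ℕ → BoundedContinuousFunction (Set.Icc (0:ℝ) T) X := fun k =>
    BoundedContinuousFunction.mkOfCompact ⟨hfun k, hfc k⟩ with hFdef
  have hFcoe : ∀ k (x : Set.Icc (0:ℝ) T), F k x = hfun k x := fun k x => rfl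
  -- equicontinuity of the range of F
  have hequi : Equicontinuous (fun f : (Set.range F) => ⇑(f : BoundedContinuousFunction (Set.Icc (0:ℝ) T) X)) := by
    intro x
    rw [Metric.equicontinuousAt_iff]
    intro δ hδ
    obtain ⟨δ₂, hδ₂, hδ₂p⟩ := Metric.uniformContinuous_iff.mp hui δ hδ
    obtain ⟨η, hη, hηp⟩ := hmod δ₂ hδ₂
    refine ⟨η, hη, fun y hxy f => ?_⟩
    obtain ⟨k, hk⟩ := f.2
    have hd : dist (h k (x:ℝ)) (h k (y:ℝ)) < δ₂ := by
      rw [dist_eq_norm, norm_sub_rev]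
      exact hηp k x x.2 y y.2 (by rwa [← Real.dist_eq, ← Subtype.dist_eq] )
    have : dist ((f : BoundedContinuousFunction (Set.Icc (0:ℝ) T) X) x)
        ((f : BoundedContinuousFunction (Set.Icc (0:ℝ) T) X) y)
        = dist (e.symm ⟨h k x, hmem k x x.2⟩) (e.symm ⟨h k y, hmem k y y.2⟩) := by
      rw [← hk]
      rw [hFcoe, hFcoe, hfundef]
      simp [Subtype.dist_eq]
    rw [this]
    exact hδ₂p (by rwa [Subtype.dist_eq])
  -- Arzelà–Ascoli
  have hAA : IsCompact (closure (Set.range F)) := by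
    refine BoundedContinuousFunction.arzela_ascoli K hK (Set.range F) ?_ hequi
    rintro f x ⟨k, rfl⟩
    exact (e.symm ⟨h k x, hmem k x x.2⟩).2
  obtain ⟨fl, hfl, φ, hφ, hconv⟩ :=
    hAA.isSeqCompact (fun n => subset_closure (Set.mem_range_self n))
  have hconv' : TendstoUniformly (fun m => ⇑(F (φ m))) ⇑fl atTop :=
    BoundedContinuousFunction.tendsto_iff_tendstoUniformly.mp hconv
  -- final assembly
  refine ⟨φ, hφ,
    fun m t => if htm : t ∈ Set.Icc (0:ℝ) T then F (φ m) ⟨t, htm⟩ else 0,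
    fun t => if htm : t ∈ Set.Icc (0:ℝ) T then fl ⟨t, htm⟩ else 0, ?_, ?_, ?_, ?_⟩
  · intro m
    rw [continuousOn_iff_continuous_restrict]
    convert (F (φ m)).continuous using 1
    funext x
    simp only [Set.restrict_apply, dif_pos x.2]
  · intro m
    filter_upwards [heq (φ m), ae_restrict_mem measurableSet_Icc] with t h1 h2
    rw [dif_pos h2]
    refine hj ?_
    rw [hFcoe, hfundef]
    simpa [hje ⟨h (φ m) t, hmem (φ m) t h2⟩] using h1.symm
  · rw [continuousOn_iff_continuous_restrict]
    convert fl.continuous using 1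
    funext x
    simp only [Set.restrict_apply, dif_pos x.2]
  · rw [tendstoUniformlyOn_iff_tendstoUniformly_comp_coe]
    have e1 : (fun m (x : Set.Icc (0:ℝ) T) =>
        (if htm : (x:ℝ) ∈ Set.Icc (0:ℝ) T then F (φ m) ⟨x, htm⟩ else 0))
        = fun m => ⇑(F (φ m)) := by
      funext m x
      rw [dif_pos x.2]
    have e2 : ((fun t => if htm : t ∈ Set.Icc (0:ℝ) T then fl ⟨t, htm⟩ else 0) ∘
        (Subtype.val : Set.Icc (0:ℝ) T → ℝ)) = ⇑fl := by
      funext x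
      simp only [Function.comp_apply]
      rw [dif_pos x.2]
    rw [e1, e2]
    exact hconv'
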